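/- For all real numbers r ≥ 0 and t ≥ 0: (e^r - 2 + e^{-r}) / (e^{r+t} - 2 + e^{-r-t}) ≥ e^{-t}(1 - 2e^{-r}), where the denominator is positive for r + t > 0. -/
import Mathlib

/-- For `r, t ≥ 0` with `r + t > 0`:
`(e^r - 2 + e^{-r})/(e^{r+t} - 2 + e^{-r-t}) ≥ e^{-t}(1 - 2e^{-r})`,
and the denominator is positive. -/
theorem exp_ratio_ge (r t : ℝ) (hr : 0 ≤ r) (ht : 0 ≤ t) (hrt : 0 < r + t) :
    0 < Real.exp (r + t) - 2 + Real.exp (-r - t) ∧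
    (Real.exp r - 2 + Real.exp (-r)) / (Real.exp (r + t) - 2 + Real.exp (-r - t))
      ≥ Real.exp (-t) * (1 - 2 * Real.exp (-r)) := by
  have h1 : Real.exp r * Real.exp (-r) = 1 := by
    rw [← Real.exp_add]; simp
  have h2 : Real.exp t * Real.exp (-t) = 1 := by
    rw [← Real.exp_add]; simp
  have hrp : (1:ℝ) ≤ Real.exp r := Real.one_le_exp hr
  have htp : (1:ℝ) ≤ Real.exp t := Real.one_le_exp ht
  have hrn : Real.exp (-r) ≤ 1 := Real.exp_le_one_iff.mpr (by linarith)
  have htn : Real.exp (-t) ≤ 1 := Real.exp_le_one_iff.mpr (by linarith)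
  have hrn0 : 0 < Real.exp (-r) := Real.exp_pos _
  have htn0 : 0 < Real.exp (-t) := Real.exp_pos _
  have hst : 1 < Real.exp (r + t) := by nlinarith [Real.add_one_le_exp (r+t)]
  have hD : 0 < Real.exp (r + t) - 2 + Real.exp (-r - t) := by
    have h3 : Real.exp (r + t) * Real.exp (-r - t) = 1 := by
      rw [← Real.exp_add]; ring_nf; simp
    nlinarith [sq_nonneg (Real.exp (r + t) - 1)]
  refine ⟨hD, ?_⟩
  rw [ge_iff_le, le_div_iff₀ hD]
  have e1 : Real.exp (r + t) = Real.exp r * Real.exp t := by rw [← Real.exp_add]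
  have e2 : Real.exp (-r - t) = Real.exp (-r) * Real.exp (-t) := by
    rw [← Real.exp_add]; ring_nf
  rw [e1, e2]
  nlinarith [sq_nonneg (Real.exp (-r) - Real.exp (-t)), sq_nonneg (1 - Real.exp (-r)),
    sq_nonneg (1 - Real.exp (-t)), sq_nonneg (1 - Real.exp (-r) * Real.exp (-t)),
    mul_pos hrn0 htn0, sq_nonneg (Real.exp (-r) + Real.exp (-t) - 2),
    mul_nonneg (mul_nonneg hrn0.le htn0.le) (sq_nonneg (1 - Real.exp (-r) * Real.exp (-t))),
    mul_nonneg hrn0.le (sq_nonneg (1 - Real.exp (-t))),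
    mul_nonneg htn0.le (sq_nonneg (1 - Real.exp (-r)))]
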